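/- arXiv:1812.06924 — 2 statements merged into one kernel-verified Lean document; each statement's English description precedes it below -/
import Mathlib

section
/- Let X_1, X_2, ... be i.i.d. real random variables with mean zero, finite moments of all orders, and set σ² = E[X_1²]. For every even integer k ≥ 2, the limit of n^{-k/2} · E[(X_1 + ... + X_n)^k] as n → ∞ exists and equals C_k σ^k, where C_k = k! / (2^{k/2} · (k/2)!). -/
open MeasureTheory ProbabilityTheory Filter Topology Asymptotics Finset

private lemma aux_isLittleO_of_tendsto {a : ℕ → ℝ} {p : ℕ} {L : ℝ}
    (h : Tendsto (fun n => a n / (n : ℝ) ^ p) atTop (𝓝 L)) :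
    (fun n => a n - L * (n : ℝ) ^ p) =o[atTop] (fun n => (n : ℝ) ^ p) := by
  rw [isLittleO_iff_tendsto']
  · apply Tendsto.congr' _ (by simpa using h.sub_const L)
    filter_upwards [eventually_ge_atTop 1] with n hn
    have hne : ((n : ℝ)) ^ p ≠ 0 := by
      have : (0:ℝ) < (n:ℝ) := by exact_mod_cast hn
      positivity
    field_simp
  · filter_upwards [eventually_ge_atTop 1] with n hn hz
    exfalso
    have : (0:ℝ) < (n:ℝ) := by exact_mod_cast hn
    exact (pow_ne_zero p this.ne') hz

private lemma aux_tendsto_of_isLittleO {a : ℕ → ℝ} {p : ℕ} {L : ℝ}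
    (h : (fun n => a n - L * (n : ℝ) ^ p) =o[atTop] (fun n => (n : ℝ) ^ p)) :
    Tendsto (fun n => a n / (n : ℝ) ^ p) atTop (𝓝 L) := by
  have h0 : Tendsto (fun n => (a n - L * (n : ℝ) ^ p) / (n : ℝ) ^ p) atTop (𝓝 0) := by
    apply h.tendsto_div_nhds_zero
  have := h0.add_const L
  rw [zero_add] at this
  apply this.congr'
  filter_upwards [eventually_ge_atTop 1] with n hn
  have hne : ((n : ℝ)) ^ p ≠ 0 := by
    have : (0:ℝ) < (n:ℝ) := by exact_mod_cast hn
    positivity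
  field_simp
  ring

private lemma aux_binom (m : ℕ) (x : ℝ) :
    ((x + 1) ^ (m + 1) - x ^ (m + 1)) - ((m : ℝ) + 1) * x ^ m
      = ∑ k ∈ range m, x ^ k * (Nat.choose (m + 1) k : ℝ) := by
  rw [add_pow]
  rw [Finset.sum_range_succ, Finset.sum_range_succ]
  simp [Nat.choose_self, Nat.choose_succ_self_right]
  ring

private lemma cesaro_pow {d : ℕ → ℝ} {m : ℕ} {c : ℝ}
    (h : Tendsto (fun n => d n / (n : ℝ) ^ m) atTop (𝓝 c)) :
    Tendsto (fun n => (∑ i ∈ range n, d i) / (n : ℝ) ^ (m + 1)) atTop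
      (𝓝 (c / ((m : ℝ) + 1))) := by
  set g : ℕ → ℝ := fun i => ((i : ℝ) + 1) ^ (m + 1) - (i : ℝ) ^ (m + 1) with hg
  have hgid : ∀ i : ℕ, g i - ((m : ℝ) + 1) * (i : ℝ) ^ m
      = ∑ k ∈ range m, (i : ℝ) ^ k * (Nat.choose (m + 1) k : ℝ) := fun i => aux_binom m _
  have hglb : ∀ i : ℕ, ((m : ℝ) + 1) * (i : ℝ) ^ m ≤ g i := by
    intro i
    have h1 : 0 ≤ g i - ((m : ℝ) + 1) * (i : ℝ) ^ m := by
      rw [hgid i]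
      exact Finset.sum_nonneg fun k _ => by positivity
    linarith
  have hg0 : ∀ i, 0 ≤ g i := fun i => le_trans (by positivity) (hglb i)
  have hgsum : ∀ n : ℕ, ∑ i ∈ range n, g i = (n : ℝ) ^ (m + 1) := by
    intro n
    have := Finset.sum_range_sub (f := fun i : ℕ => (i : ℝ) ^ (m + 1)) n
    calc ∑ i ∈ range n, g i = ∑ i ∈ range n, (((i+1 : ℕ) : ℝ) ^ (m+1) - (i : ℝ) ^ (m+1)) := by
          apply Finset.sum_congr rfl; intro i _; push_cast; ring
      _ = (n : ℝ) ^ (m + 1) - (0 : ℝ) ^ (m + 1) := by rw [this]; norm_num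
      _ = (n : ℝ) ^ (m + 1) := by simp
  have hgtop : Tendsto (fun n => ∑ i ∈ range n, g i) atTop atTop := by
    simp only [hgsum]
    exact (tendsto_pow_atTop (Nat.succ_ne_zero m)).comp tendsto_natCast_atTop_atTop
  have h1 : (fun i => d i - c * (i : ℝ) ^ m) =o[atTop] (fun i => (i : ℝ) ^ m) :=
    aux_isLittleO_of_tendsto h
  have h2 : (fun i => g i - ((m : ℝ) + 1) * (i : ℝ) ^ m) =o[atTop] (fun i => (i : ℝ) ^ m) := by
    simp only [hgid]
    apply IsLittleO.fun_sum
    intro k hk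
    have hkm := ((isLittleO_pow_pow_atTop_of_lt (Finset.mem_range.mp hk)).comp_tendsto
      (tendsto_natCast_atTop_atTop (R := ℝ))).const_mul_left ((Nat.choose (m + 1) k : ℝ))
    simpa [Function.comp_def, mul_comm] using hkm
  have hO : (fun i : ℕ => (i : ℝ) ^ m) =O[atTop] g := by
    apply isBigO_of_le
    intro i
    rw [Real.norm_of_nonneg (by positivity), Real.norm_of_nonneg (hg0 i)]
    have hpn : (0:ℝ) ≤ (i:ℝ) ^ m := by positivity
    nlinarith [hglb i]
  have h3 : (fun i => d i - c / ((m : ℝ) + 1) * g i) =o[atTop] g := by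
    have heq : (fun i => d i - c / ((m : ℝ) + 1) * g i)
        = fun i => (d i - c * (i : ℝ) ^ m)
            - (c / ((m : ℝ) + 1)) * (g i - ((m : ℝ) + 1) * (i : ℝ) ^ m) := by
      funext i
      have hm1 : ((m : ℝ) + 1) ≠ 0 := by positivity
      field_simp
      ring
    rw [heq]
    exact (h1.trans_isBigO hO).sub ((h2.const_mul_left _).trans_isBigO hO)
  have h4 := h3.sum_range hg0 hgtop
  have h5 : (fun n => (∑ i ∈ range n, d i) - c / ((m : ℝ) + 1) * (n : ℝ) ^ (m + 1))
      =o[atTop] (fun n : ℕ => (n : ℝ) ^ (m + 1)) :=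
    h4.congr (fun n => by rw [Finset.sum_sub_distrib, ← Finset.mul_sum, hgsum n])
      (fun n => hgsum n)
  exact aux_tendsto_of_isLittleO h5

private lemma key_moments
    {Ω : Type*} [MeasureSpace Ω] [IsProbabilityMeasure (ℙ : Measure Ω)]
    (X : ℕ → Ω → ℝ)
    (hmeas : ∀ i, Measurable (X i))
    (hindep : iIndepFun X ℙ)
    (hident : ∀ i, IdentDistrib (X i) (X 0) ℙ ℙ)
    (hmoments : ∀ m : ℕ, Integrable (fun ω => |X 0 ω| ^ m) ℙ)
    (hmean : ∫ ω, X 0 ω ∂ℙ = 0) :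
    ∀ j : ℕ, ∃ L : ℝ,
      Tendsto (fun n : ℕ => (∫ ω, (∑ i ∈ Finset.range n, X i ω) ^ j ∂ℙ) / (n : ℝ) ^ (j / 2))
        atTop (𝓝 L) ∧
      (Even j → L = (j.factorial : ℝ) / (2 ^ (j / 2) * (j / 2).factorial)
        * (∫ ω, (X 0 ω) ^ 2 ∂ℙ) ^ (j / 2)) := by
  -- basic infrastructure
  have hXm : ∀ (i m : ℕ), Integrable (fun ω => X i ω ^ m) ℙ := by
    intro i m
    have h1 : Integrable (fun ω => |X i ω| ^ m) ℙ := by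
      have hid : IdentDistrib (fun ω => |X i ω| ^ m) (fun ω => |X 0 ω| ^ m) ℙ ℙ :=
        (hident i).comp (measurable_abs.pow_const m)
      exact hid.integrable_iff.mpr (hmoments m)
    refine h1.mono' (((hmeas i).pow_const m).aestronglyMeasurable) ?_
    filter_upwards with ω
    simp [abs_pow, abs_of_nonneg (abs_nonneg _)]
  have hmom : ∀ (i m : ℕ), ∫ ω, X i ω ^ m ∂ℙ = ∫ ω, X 0 ω ^ m ∂ℙ := fun i m =>
    ((hident i).comp (measurable_id.pow_const m)).integral_eq
  set S : ℕ → Ω → ℝ := fun n ω => ∑ i ∈ Finset.range n, X i ω with hSdef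
  have hSmeas : ∀ n, Measurable (S n) := fun n =>
    Finset.measurable_sum _ (fun i _ => hmeas i)
  have hindS : ∀ (n a b : ℕ), IndepFun (fun ω => S n ω ^ a) (fun ω => X n ω ^ b) ℙ := by
    intro n a b
    have hbase : IndepFun (S n) (X n) ℙ := by
      have h := hindep.indepFun_finsetSum_of_notMem hmeas
        (Finset.notMem_range_self (n := n))
      have he : (∑ j ∈ Finset.range n, X j) = S n := by
        funext ω; simp [hSdef, Finset.sum_apply]
      rwa [he] at h
    exact hbase.comp (measurable_id.pow_const a) (measurable_id.pow_const b)
  have hSsucc : ∀ (n : ℕ) (ω : Ω), S (n + 1) ω = S n ω + X n ω := by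
    intro n ω; simp [hSdef, Finset.sum_range_succ]
  have hSint : ∀ (n a : ℕ), Integrable (fun ω => S n ω ^ a) ℙ := by
    intro n
    induction n with
    | zero =>
      intro a
      have : (fun ω : Ω => S 0 ω ^ a) = fun _ => (0 : ℝ) ^ a := by
        funext ω; simp [hSdef]
      rw [this]; exact integrable_const _
    | succ n IH =>
      intro a
      have hrw : (fun ω => S (n + 1) ω ^ a)
          = fun ω => ∑ i ∈ Finset.range (a + 1),
              S n ω ^ i * X n ω ^ (a - i) * (a.choose i : ℝ) := by
        funext ω; rw [hSsucc n ω, add_pow]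
      rw [hrw]
      apply integrable_finset_sum
      intro i _
      exact ((hindS n i (a - i)).integrable_mul (IH i) (hXm n (a - i))).mul_const _
  have hrec : ∀ (n j : ℕ), ∫ ω, S (n + 1) ω ^ j ∂ℙ
      = ∑ i ∈ Finset.range (j + 1),
          (∫ ω, S n ω ^ i ∂ℙ) * (∫ ω, X 0 ω ^ (j - i) ∂ℙ) * (j.choose i : ℝ) := by
    intro n j
    have hrw : (fun ω => S (n + 1) ω ^ j)
        = fun ω => ∑ i ∈ Finset.range (j + 1),
            S n ω ^ i * X n ω ^ (j - i) * (j.choose i : ℝ) := by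
      funext ω; rw [hSsucc n ω, add_pow]
    rw [hrw, integral_finset_sum]
    · apply Finset.sum_congr rfl
      intro i _
      rw [integral_mul_const, (hindS n i (j - i)).integral_fun_mul_eq_mul_integral
        ((hSmeas n).pow_const i).aestronglyMeasurable
        ((hmeas n).pow_const (j - i)).aestronglyMeasurable, hmom n (j - i)]
    · intro i _
      exact ((hindS n i (j - i)).integrable_mul (hSint n i) (hXm n (j - i))).mul_const _
  set μ2 : ℝ := ∫ ω, X 0 ω ^ 2 ∂ℙ with hμ2
  have hμ0 : (∫ ω, X 0 ω ^ 0 ∂ℙ) = 1 := by simp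
  have hμ1 : (∫ ω, X 0 ω ^ 1 ∂ℙ) = 0 := by simpa using hmean
  intro j
  induction j using Nat.strong_induction_on with
  | _ j IH =>
  rcases j with _ | _ | j'
  · -- j = 0
    refine ⟨1, ?_, ?_⟩
    · have he : (fun n : ℕ => (∫ ω, S n ω ^ 0 ∂ℙ) / (n : ℝ) ^ (0 / 2)) = fun _ => (1:ℝ) := by
        funext n; simp
      rw [he]; exact tendsto_const_nhds
    · intro _; simp [Nat.factorial]
  · -- j = 1
    have hA : ∀ n, (∫ ω, S n ω ^ 1 ∂ℙ) = 0 := by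
      intro n
      calc (∫ ω, S n ω ^ 1 ∂ℙ) = ∑ i ∈ Finset.range n, ∫ ω, X i ω ∂ℙ := by
            simp only [pow_one, hSdef]
            exact integral_finset_sum _ (fun i _ => by simpa using hXm i 1)
        _ = 0 := Finset.sum_eq_zero fun i _ => by
            have := hmom i 1; simp only [pow_one] at this; rw [this, hmean]
    refine ⟨0, ?_, fun h => absurd h (by simp)⟩
    show Tendsto (fun n : ℕ => (∫ ω, S n ω ^ 1 ∂ℙ) / (n : ℝ) ^ (1 / 2)) atTop (𝓝 0)
    simp only [hA, zero_div]; exact tendsto_const_nhds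
  · -- j = j' + 2
    choose L hL hLev using IH
    set L' : ℕ → ℝ := fun i => if h : i < j' + 2 then L i h else 0 with hL'def
    have hL'tend : ∀ i, i < j' + 2 →
        Tendsto (fun n : ℕ => (∫ ω, S n ω ^ i ∂ℙ) / (n : ℝ) ^ (i / 2)) atTop (𝓝 (L' i)) := by
      intro i h
      have : L' i = L i h := by rw [hL'def]; simp [h]
      rw [this]; exact hL i h
    have hdelta : ∀ n : ℕ, (∫ ω, S (n + 1) ω ^ (j' + 2) ∂ℙ) - (∫ ω, S n ω ^ (j' + 2) ∂ℙ)
        = ∑ i ∈ Finset.range (j' + 1),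
            (∫ ω, S n ω ^ i ∂ℙ) * (∫ ω, X 0 ω ^ (j' + 2 - i) ∂ℙ)
              * ((j' + 2).choose i : ℝ) := by
      intro n
      rw [hrec n (j' + 2), Finset.sum_range_succ, Finset.sum_range_succ]
      rw [show j' + 2 - (j' + 2) = 0 from by omega, show j' + 2 - (j' + 1) = 1 from by omega,
        hμ0, hμ1, Nat.choose_self]
      push_cast
      ring
    have htermlim : ∀ i, i < j' + 1 →
        Tendsto (fun n : ℕ => (∫ ω, S n ω ^ i ∂ℙ) * (∫ ω, X 0 ω ^ (j' + 2 - i) ∂ℙ)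
            * ((j' + 2).choose i : ℝ) / (n : ℝ) ^ (j' / 2)) atTop
          (𝓝 ((if i / 2 = j' / 2 then L' i else 0) * (∫ ω, X 0 ω ^ (j' + 2 - i) ∂ℙ)
            * ((j' + 2).choose i : ℝ))) := by
      intro i hi
      have hsplit : ∀ n : ℕ, (∫ ω, S n ω ^ i ∂ℙ) / (n : ℝ) ^ (j' / 2)
          = ((∫ ω, S n ω ^ i ∂ℙ) / (n : ℝ) ^ (i / 2)) * ((n : ℝ) ^ (j' / 2 - i / 2))⁻¹ := by
        intro n
        have hpw : (n : ℝ) ^ (j' / 2) = (n : ℝ) ^ (i / 2) * (n : ℝ) ^ (j' / 2 - i / 2) := by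
          rw [← pow_add]; congr 1; omega
        rw [hpw, ← div_div, div_eq_mul_inv]
      have hinv : Tendsto (fun n : ℕ => ((n : ℝ) ^ (j' / 2 - i / 2))⁻¹) atTop
          (𝓝 (if i / 2 = j' / 2 then 1 else 0)) := by
        by_cases hc : i / 2 = j' / 2
        · rw [if_pos hc, show j' / 2 - i / 2 = 0 from by omega]
          simpa using (tendsto_const_nhds : Tendsto (fun _ : ℕ => (1:ℝ)) atTop (𝓝 1))
        · rw [if_neg hc]
          exact Tendsto.inv_tendsto_atTop
            ((tendsto_pow_atTop (by omega)).comp tendsto_natCast_atTop_atTop)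
      have hmul := (hL'tend i (by omega)).mul hinv
      rw [show L' i * (if i / 2 = j' / 2 then (1:ℝ) else 0)
          = (if i / 2 = j' / 2 then L' i else 0) from by split <;> simp] at hmul
      have hmul2 := hmul.congr fun n => (hsplit n).symm
      have h3 := (hmul2.mul_const (∫ ω, X 0 ω ^ (j' + 2 - i) ∂ℙ)).mul_const
        (((j' + 2).choose i : ℝ))
      apply h3.congr; intro n; ring
    set c : ℝ := ∑ i ∈ Finset.range (j' + 1),
        (if i / 2 = j' / 2 then L' i else 0) * (∫ ω, X 0 ω ^ (j' + 2 - i) ∂ℙ)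
          * ((j' + 2).choose i : ℝ) with hcdef
    have hdlim : Tendsto (fun n : ℕ =>
        ((∫ ω, S (n + 1) ω ^ (j' + 2) ∂ℙ) - (∫ ω, S n ω ^ (j' + 2) ∂ℙ)) / (n : ℝ) ^ (j' / 2))
        atTop (𝓝 c) := by
      have ht := tendsto_finset_sum (Finset.range (j' + 1))
        (fun i hi => htermlim i (Finset.mem_range.mp hi))
      refine ht.congr fun n => ?_
      rw [← Finset.sum_div, ← hdelta n]
    have hsum : ∀ n : ℕ, ∑ t ∈ Finset.range n,
        ((∫ ω, S (t + 1) ω ^ (j' + 2) ∂ℙ) - (∫ ω, S t ω ^ (j' + 2) ∂ℙ))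
          = ∫ ω, S n ω ^ (j' + 2) ∂ℙ := by
      intro n
      rw [Finset.sum_range_sub (f := fun t => ∫ ω, S t ω ^ (j' + 2) ∂ℙ)]
      have h0 : (∫ ω, S 0 ω ^ (j' + 2) ∂ℙ) = 0 := by
        have he : (fun ω => S 0 ω ^ (j' + 2)) = fun _ => (0 : ℝ) := by
          funext ω; simp [hSdef]
        rw [he, integral_zero]
      rw [h0, sub_zero]
    have hces := cesaro_pow hdlim
    refine ⟨c / ((j' / 2 : ℕ) + 1 : ℝ), ?_, ?_⟩
    · rw [show (j' + 2) / 2 = j' / 2 + 1 from by omega]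
      refine (hces.congr fun n => ?_)
      rw [hsum n]
    · intro hev
      have hevj' : j' % 2 = 0 := by rcases hev with ⟨t, ht⟩; omega
      have hcval : c = (if j' / 2 = j' / 2 then L' j' else 0)
          * (∫ ω, X 0 ω ^ (j' + 2 - j') ∂ℙ) * ((j' + 2).choose j' : ℝ) := by
        rw [hcdef]
        apply Finset.sum_eq_single_of_mem j' (Finset.mem_range.mpr (by omega))
        intro i hi hne
        have hi' := Finset.mem_range.mp hi
        have : ¬ (i / 2 = j' / 2) := by omega
        simp [this]
      rw [if_pos rfl, show j' + 2 - j' = 2 from by omega] at hcval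
      have hL'j : L' j' = ((j'.factorial : ℝ) / (2 ^ (j' / 2) * (j' / 2).factorial))
          * μ2 ^ (j' / 2) := by
        have h1 : L' j' = L j' (by omega) := by rw [hL'def]; simp
        rw [h1]
        exact hLev j' (by omega) (Nat.even_iff.mpr hevj')
      have hchn : (j' + 2).choose j' * 2 = (j' + 2) * (j' + 1) := by
        have h1 : (j' + 2).choose j' = (j' + 2).choose 2 := by
          rw [← Nat.choose_symm (show 2 ≤ j' + 2 from by omega)]
          congr 1
        rw [h1, Nat.choose_two_right]
        rw [Nat.div_mul_cancel]
        · congr 1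
        · rw [mul_comm]
          exact (Nat.even_mul_succ_self (j' + 1)).two_dvd
      have hchR : (((j' + 2).choose j' : ℕ) : ℝ) = ((j' : ℝ) + 2) * ((j' : ℝ) + 1) / 2 := by
        have := congrArg (Nat.cast : ℕ → ℝ) hchn
        push_cast at this
        linarith
      obtain ⟨p, rfl⟩ : ∃ p, j' = 2 * p := ⟨j' / 2, by omega⟩
      rw [hcval, hL'j, hchR]
      rw [show (2 * p) / 2 = p from by omega, show (2 * p + 2) / 2 = p + 1 from by omega]
      rw [show (2 * p + 2).factorial = (2 * p + 2) * ((2 * p + 1) * (2 * p).factorial) from by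
        rw [show 2 * p + 2 = (2 * p + 1) + 1 from by ring, Nat.factorial_succ,
          Nat.factorial_succ]]
      rw [show (p + 1).factorial = (p + 1) * p.factorial from Nat.factorial_succ p]
      have hfp : (0:ℝ) < (p.factorial : ℝ) := by exact_mod_cast p.factorial_pos
      have h2p : (0:ℝ) < (2:ℝ) ^ p := by positivity
      push_cast
      rw [pow_succ]
      field_simp
      ring


/-- For i.i.d. centered real random variables with all moments finite, the normalized
even moments `n^{-k/2} E[(X_1+...+X_n)^k]` converge to `C_k σ^k` with
`C_k = k! / (2^{k/2} (k/2)!)`. -/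
theorem iid_even_asymptotic_moments
    {Ω : Type*} [MeasureSpace Ω] [IsProbabilityMeasure (ℙ : Measure Ω)]
    (X : ℕ → Ω → ℝ)
    (hmeas : ∀ i, Measurable (X i))
    (hindep : iIndepFun X ℙ)
    (hident : ∀ i, IdentDistrib (X i) (X 0) ℙ ℙ)
    (hmoments : ∀ m : ℕ, Integrable (fun ω => |X 0 ω| ^ m) ℙ)
    (hmean : ∫ ω, X 0 ω ∂ℙ = 0)
    (k : ℕ) (hk : 2 ≤ k) (hkeven : Even k) :
    Tendsto
      (fun n : ℕ => (∫ ω, (∑ i ∈ Finset.range n, X i ω) ^ k ∂ℙ) / (n : ℝ) ^ (k / 2))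
      atTop
      (𝓝 ((k.factorial : ℝ) / (2 ^ (k / 2) * (k / 2).factorial)
        * (∫ ω, (X 0 ω) ^ 2 ∂ℙ) ^ (k / 2))) := by
  obtain ⟨L, hL, hLev⟩ := key_moments X hmeas hindep hident hmoments hmean k
  rw [← hLev hkeven]
  exact hL
end

section
/- Let φ_ω(n) (n ∈ ℕ, ω ∈ Ω) be a measurable family satisfying 0 < φ_ω(n) ≤ 1 and the submultiplicativity φ_ω(n+m) ≤ φ_ω(n) · φ_{θ^n ω}(m) for a measure-preserving ergodic system (Ω, F, P, θ). If lim_{n→∞} (φ_ω(n))^{1/n} = 1 almost surely, then φ_ω(n) = 1 for P-almost every ω and all n ≥ 1. -/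
open MeasureTheory Filter Topology Finset

/-- Key step: for each fixed `n ≥ 1` and level `c < 1`, the set where `φ ω n ≤ c` is null. -/
lemma key_null
    {Ω : Type*} [MeasurableSpace Ω] {μ : Measure Ω} [IsProbabilityMeasure μ]
    (θ : Ω → Ω) (hmp : MeasurePreserving θ μ μ)
    (φ : Ω → ℕ → ℝ) (hmeas : ∀ n, Measurable fun ω => φ ω n)
    (hpos : ∀ᵐ ω ∂μ, ∀ n, 0 < φ ω n ∧ φ ω n ≤ 1)
    (hsub : ∀ᵐ ω ∂μ, ∀ n m : ℕ, φ ω (n + m) ≤ φ ω n * φ (θ^[n] ω) m)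
    (hlim : ∀ᵐ ω ∂μ,
      Tendsto (fun n : ℕ => (φ ω n) ^ ((n : ℝ)⁻¹)) atTop (𝓝 (1 : ℝ)))
    (n : ℕ) (hn : 1 ≤ n) (c : ℝ) (hc0 : 0 < c) (hc1 : c < 1) :
    μ {ω | φ ω n ≤ c} = 0 := by
  set A : Set Ω := {ω | φ ω n ≤ c} with hAdef
  have hA : MeasurableSet A := measurableSet_le (hmeas n) measurable_const
  have hθmeas : Measurable θ := hmp.measurable
  -- visit-counting sums (as indicators of preimages)
  set S : ℕ → Ω → ℝ :=
    fun k ω => ∑ j ∈ Finset.range k, (θ^[j * n] ⁻¹' A).indicator (fun _ => (1:ℝ)) ω with hSdef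
  have hLc : Real.log c < 0 := Real.log_neg hc0 hc1
  -- positivity at all iterates, a.e.
  have hps : ∀ᵐ ω ∂μ, ∀ i m, 0 < φ (θ^[i] ω) m ∧ φ (θ^[i] ω) m ≤ 1 := by
    rw [ae_all_iff]
    intro i
    exact (hmp.iterate i).quasiMeasurePreserving.ae hpos
  -- pointwise: the visit frequency tends to 0 a.e.
  have hptwise : ∀ᵐ ω ∂μ, Tendsto (fun k : ℕ => (k : ℝ)⁻¹ * S k ω) atTop (𝓝 0) := by
    filter_upwards [hps, hsub, hlim] with ω h1 h2 h3
    have hpos0 : ∀ m, 0 < φ ω m := by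
      intro m
      have := (h1 0 m).1
      simpa using this
    -- Step A: log bound by induction
    have hlog : ∀ k, Real.log (φ ω (k * n)) ≤ S k ω * Real.log c := by
      intro k
      induction k with
      | zero =>
        simp only [Nat.zero_mul, hSdef, Finset.range_zero, Finset.sum_empty, zero_mul]
        exact Real.log_nonpos (hpos0 0).le (by simpa using (h1 0 0).2)
      | succ k ih =>
        have hsplit : (k + 1) * n = k * n + n := by ring
        have hstep := h2 (k * n) n
        have hφpos := hpos0 (k * n)
        have hφpos' := (h1 (k * n) n).1
        have hlogmul : Real.log (φ ω (k * n + n)) ≤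
            Real.log (φ ω (k * n)) + Real.log (φ (θ^[k * n] ω) n) := by
          calc Real.log (φ ω (k * n + n)) ≤ Real.log (φ ω (k * n) * φ (θ^[k * n] ω) n) :=
                Real.log_le_log (hpos0 _) hstep
            _ = _ := Real.log_mul (ne_of_gt hφpos) (ne_of_gt hφpos')
        have hterm : Real.log (φ (θ^[k * n] ω) n) ≤
            (θ^[k * n] ⁻¹' A).indicator (fun _ => (1:ℝ)) ω * Real.log c := by
          by_cases hmem : ω ∈ θ^[k * n] ⁻¹' A
          · have hcA : φ (θ^[k * n] ω) n ≤ c := hmem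
            rw [Set.indicator_of_mem hmem, one_mul]
            exact Real.log_le_log hφpos' hcA
          · rw [Set.indicator_of_notMem hmem, zero_mul]
            exact Real.log_nonpos hφpos'.le (h1 (k * n) n).2
        have hSsucc : S (k + 1) ω = S k ω + (θ^[k * n] ⁻¹' A).indicator (fun _ => (1:ℝ)) ω := by
          simp [hSdef, Finset.sum_range_succ]
        rw [hsplit, hSsucc, add_mul]
        exact hlogmul.trans (add_le_add ih hterm)
    -- Step B: (N)⁻¹ log φ ω N → 0
    have htend0 : Tendsto (fun N : ℕ => ((N : ℝ))⁻¹ * Real.log (φ ω N)) atTop (𝓝 0) := by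
      have hcomp : Tendsto (fun N : ℕ => Real.log ((φ ω N) ^ ((N : ℝ)⁻¹))) atTop (𝓝 0) := by
        have := ((Real.continuousAt_log one_ne_zero).tendsto).comp h3
        simpa [Function.comp_def] using this
      have heq : ∀ N : ℕ, Real.log ((φ ω N) ^ ((N : ℝ)⁻¹)) =
          ((N : ℝ))⁻¹ * Real.log (φ ω N) := fun N => Real.log_rpow (hpos0 N) _
      simpa [heq] using hcomp
    -- Step C: compose with k ↦ k * n
    have hmulat : Tendsto (fun k : ℕ => k * n) atTop atTop :=
      tendsto_atTop_mono (fun k => Nat.le_mul_of_pos_right k hn) tendsto_id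
    have hB : Tendsto (fun k : ℕ => (((k * n : ℕ) : ℝ))⁻¹ * Real.log (φ ω (k * n)))
        atTop (𝓝 0) := htend0.comp hmulat
    -- Step D: squeeze
    have hSnonneg : ∀ k, 0 ≤ S k ω := by
      intro k
      apply Finset.sum_nonneg
      intro j _
      exact Set.indicator_nonneg (fun _ _ => zero_le_one) ω
    have hU : Tendsto (fun k : ℕ => (((k * n : ℕ) : ℝ))⁻¹ * S k ω * (-Real.log c))
        atTop (𝓝 0) := by
      have hupper : Tendsto (fun k : ℕ => -((((k * n : ℕ) : ℝ))⁻¹ * Real.log (φ ω (k * n))))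
          atTop (𝓝 0) := by simpa using hB.neg
      apply tendsto_of_tendsto_of_tendsto_of_le_of_le tendsto_const_nhds hupper
      · intro k
        exact mul_nonneg (mul_nonneg (by positivity) (hSnonneg k)) (by linarith)
      · intro k
        have h1' := hlog k
        have hk0 : (0:ℝ) ≤ (((k * n : ℕ) : ℝ))⁻¹ := by positivity
        have hmm : (((k * n : ℕ) : ℝ))⁻¹ * Real.log (φ ω (k * n)) ≤
            (((k * n : ℕ) : ℝ))⁻¹ * (S k ω * Real.log c) :=
          mul_le_mul_of_nonneg_left h1' hk0
        nlinarith [hmm]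
    have hident : ∀ k : ℕ, (k : ℝ)⁻¹ * S k ω =
        ((((k * n : ℕ) : ℝ))⁻¹ * S k ω * (-Real.log c)) * ((n : ℝ) * (-Real.log c)⁻¹) := by
      intro k
      have hncast : ((k * n : ℕ) : ℝ) = (k : ℝ) * (n : ℝ) := by push_cast; ring
      have hnne : (n : ℝ) ≠ 0 := by positivity
      have hLne : (-Real.log c) ≠ 0 := by linarith
      rw [hncast, mul_inv]
      rw [show ((k:ℝ)⁻¹ * (n:ℝ)⁻¹ * S k ω * (-Real.log c)) * ((n:ℝ) * (-Real.log c)⁻¹)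
          = (k:ℝ)⁻¹ * S k ω * ((n:ℝ)⁻¹ * n) * ((-Real.log c) * (-Real.log c)⁻¹) from by ring]
      rw [inv_mul_cancel₀ hnne, mul_inv_cancel₀ hLne, mul_one, mul_one]
    have := hU.mul_const ((n : ℝ) * (-Real.log c)⁻¹)
    rw [zero_mul] at this
    exact this.congr (fun k => (hident k).symm)
  -- measurability and integrability of S
  have hSmeas : ∀ k, Measurable (S k) := by
    intro k
    apply Finset.measurable_sum
    intro j _
    exact (measurable_const.indicator ((hθmeas.iterate (j * n)) hA))
  have hSint : ∀ k, Integrable (S k) μ := by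
    intro k
    apply integrable_finset_sum
    intro j _
    exact (integrable_const (1:ℝ)).indicator ((hθmeas.iterate (j * n)) hA)
  -- integral of each indicator is μ A
  have hIind : ∀ j : ℕ, ∫ ω, (θ^[j * n] ⁻¹' A).indicator (fun _ => (1:ℝ)) ω ∂μ
      = (μ A).toReal := by
    intro j
    rw [integral_indicator_const (1:ℝ) ((hθmeas.iterate (j * n)) hA)]
    rw [measureReal_def, (hmp.iterate (j * n)).measure_preimage hA.nullMeasurableSet]
    simp
  have hIS : ∀ k : ℕ, ∫ ω, S k ω ∂μ = (k : ℝ) * (μ A).toReal := by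
    intro k
    rw [hSdef]
    rw [integral_finset_sum _ (fun j _ =>
      (integrable_const (1:ℝ)).indicator ((hθmeas.iterate (j * n)) hA))]
    simp [hIind]
  -- dominated convergence
  have hDCT : Tendsto (fun k : ℕ => ∫ ω, (k : ℝ)⁻¹ * S k ω ∂μ) atTop (𝓝 0) := by
    have h0 : (0:ℝ) = ∫ _ : Ω, (0:ℝ) ∂μ := by simp
    rw [h0]
    apply tendsto_integral_of_dominated_convergence (fun _ => (1:ℝ))
    · intro k
      exact ((hSmeas k).const_mul _).aestronglyMeasurable
    · exact integrable_const 1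
    · intro k
      filter_upwards with ω
      have hSle : S k ω ≤ k := by
        have : S k ω ≤ ∑ _j ∈ Finset.range k, (1:ℝ) := by
          apply Finset.sum_le_sum
          intro j _
          by_cases h : ω ∈ θ^[j * n] ⁻¹' A <;> simp [Set.indicator_apply, h]
        simpa using this
      have hS0 : 0 ≤ S k ω := Finset.sum_nonneg fun j _ =>
        Set.indicator_nonneg (fun _ _ => zero_le_one) ω
      rw [Real.norm_eq_abs, abs_of_nonneg (by positivity)]
      rcases Nat.eq_zero_or_pos k with hk | hk
      · simp [hk]
      · have hkpos : (0:ℝ) < k := by exact_mod_cast hk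
        have hle2 : (k:ℝ)⁻¹ * S k ω ≤ (k:ℝ)⁻¹ * k :=
          mul_le_mul_of_nonneg_left hSle (by positivity)
        simpa [inv_mul_cancel₀ (ne_of_gt hkpos)] using hle2
    · exact hptwise
  -- the integrals are constantly (μ A).toReal for k ≥ 1
  have hIconst : ∀ k : ℕ, 1 ≤ k → ∫ ω, (k : ℝ)⁻¹ * S k ω ∂μ = (μ A).toReal := by
    intro k hk
    rw [integral_const_mul, hIS k]
    have hkpos : (0:ℝ) < k := by exact_mod_cast hk
    field_simp
  have hzero : (μ A).toReal = 0 := by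
    have : Tendsto (fun _ : ℕ => (μ A).toReal) atTop (𝓝 0) := by
      apply hDCT.congr'
      filter_upwards [eventually_ge_atTop 1] with k hk
      exact (hIconst k hk)
    exact tendsto_nhds_unique tendsto_const_nhds this
  have := ENNReal.toReal_eq_zero_iff (μ A) |>.mp hzero
  rcases this with h | h
  · exact h
  · exact absurd h (measure_ne_top μ A)

/-- A measurable submultiplicative family `0 < φ_ω(n) ≤ 1` over an ergodic system with
`(φ_ω(n))^{1/n} → 1` a.s. must satisfy `φ_ω(n) = 1` a.s. for all `n ≥ 1`. -/
theorem submultiplicative_degenerate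
    {Ω : Type*} [MeasurableSpace Ω] {μ : Measure Ω} [IsProbabilityMeasure μ]
    (θ : Ω → Ω) (herg : Ergodic θ μ)
    (φ : Ω → ℕ → ℝ) (hmeas : ∀ n, Measurable fun ω => φ ω n)
    (hpos : ∀ᵐ ω ∂μ, ∀ n, 0 < φ ω n ∧ φ ω n ≤ 1)
    (hsub : ∀ᵐ ω ∂μ, ∀ n m : ℕ, φ ω (n + m) ≤ φ ω n * φ (θ^[n] ω) m)
    (hlim : ∀ᵐ ω ∂μ,
      Tendsto (fun n : ℕ => (φ ω n) ^ ((n : ℝ)⁻¹)) atTop (𝓝 (1 : ℝ))) :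
    ∀ᵐ ω ∂μ, ∀ n : ℕ, 1 ≤ n → φ ω n = 1 := by
  have hmp : MeasurePreserving θ μ μ := herg.toMeasurePreserving
  have key : ∀ n : ℕ, ∀ q : ℚ, ∀ᵐ ω ∂μ,
      1 ≤ n → 0 < q → (q : ℝ) < 1 → ¬ (φ ω n ≤ (q : ℝ)) := by
    intro n q
    by_cases h : 1 ≤ n ∧ 0 < q ∧ (q : ℝ) < 1
    · have hq0 : (0:ℝ) < (q:ℝ) := by exact_mod_cast h.2.1
      have hnull := key_null θ hmp φ hmeas hpos hsub hlim n h.1 (q : ℝ) hq0 h.2.2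
      have : ∀ᵐ ω ∂μ, ¬ (φ ω n ≤ (q : ℝ)) := by
        rw [ae_iff]
        simpa using hnull
      filter_upwards [this] with ω hω _ _ _
      exact hω
    · filter_upwards with ω h1 h2 h3
      exact absurd ⟨h1, h2, h3⟩ h
  have key' : ∀ᵐ ω ∂μ, ∀ n : ℕ, ∀ q : ℚ,
      1 ≤ n → 0 < q → (q : ℝ) < 1 → ¬ (φ ω n ≤ (q : ℝ)) := by
    rw [ae_all_iff]
    intro n
    rw [ae_all_iff]
    intro q
    exact key n q
  filter_upwards [key', hpos] with ω hω hp n hn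
  rcases lt_or_eq_of_le (hp n).2 with hlt | heq
  · exfalso
    obtain ⟨q, hq1, hq2⟩ := exists_rat_btwn hlt
    have hq0 : 0 < q := by
      have := (hp n).1.trans hq1
      exact_mod_cast this
    exact hω n q hn hq0 hq2 hq1.le
  · exact heq
end
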